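/- (Proposition 4.1(iii)) Let X₁, X₂, … be an infinite sequence of independent random points, each uniformly distributed on the unit sphere S² ⊂ ℝ³. Fix c > 0 and α > 3, and for each N with c/N^α < 1 set p_N = c/N^α and a_N = 2·arcsin(√p_N). Let G_N be the random intersection graph on vertex set {1,…,N} built from X₁,…,X_N with caps of angular radius a_N. Then almost surely, for all sufficiently large N, the graph G_N has no edges, i.e., every vertex of G_N is isolated. -/

import Mathlib

open MeasureTheory Real Set
open scoped ENNReal RealInnerProductSpace
open scoped NNReal

/-- The unit sphere `S²` in `ℝ³`. -/
noncomputable def S2 : Set (EuclideanSpace ℝ (Fin 3)) :=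
  Metric.sphere (0 : EuclideanSpace ℝ (Fin 3)) 1

/-- The uniform probability measure on the unit sphere `S² ⊂ ℝ³`: the rotation-invariant
surface (2-dimensional Hausdorff) measure restricted to the sphere, normalized by the total
surface area `4π`. -/
noncomputable def sphereUniform : Measure (EuclideanSpace ℝ (Fin 3)) :=
  (ENNReal.ofReal (4 * π))⁻¹ •
    (μH[2] : Measure (EuclideanSpace ℝ (Fin 3))).restrict S2

/-- The angular distance `θ(x,y) = arccos ⟪x,y⟫` between two points of the sphere. -/
noncomputable def angDist (x y : EuclideanSpace ℝ (Fin 3)) : ℝ :=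
  Real.arccos ⟪x, y⟫

noncomputable abbrev EE := EuclideanSpace ℝ (Fin 3)

lemma normalize_lip : LipschitzOnWith 2 (fun w : EE => ‖w‖⁻¹ • w) {w : EE | 1 ≤ ‖w‖} := by
  apply LipschitzOnWith.of_dist_le_mul
  intro w hw w' hw'
  simp only [Set.mem_setOf_eq] at hw hw'
  have ha : (0:ℝ) < ‖w‖ := lt_of_lt_of_le one_pos hw
  have hb : (0:ℝ) < ‖w'‖ := lt_of_lt_of_le one_pos hw'
  rw [dist_eq_norm, dist_eq_norm]
  have key : ‖w‖⁻¹ • w - ‖w'‖⁻¹ • w' = ‖w‖⁻¹ • (w - w') + (‖w‖⁻¹ - ‖w'‖⁻¹) • w' := by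
    rw [smul_sub, sub_smul]; abel
  rw [key]
  have h1 : ‖‖w‖⁻¹ • (w - w')‖ ≤ ‖w - w'‖ := by
    rw [norm_smul, norm_inv, norm_norm]
    calc ‖w‖⁻¹ * ‖w - w'‖ ≤ 1 * ‖w - w'‖ := by
          apply mul_le_mul_of_nonneg_right _ (norm_nonneg _)
          rw [inv_le_one_iff₀]; right; exact hw
      _ = ‖w - w'‖ := one_mul _
  have h2 : ‖(‖w‖⁻¹ - ‖w'‖⁻¹) • w'‖ ≤ ‖w - w'‖ := by
    rw [norm_smul, Real.norm_eq_abs]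
    have : ‖w‖⁻¹ - ‖w'‖⁻¹ = (‖w'‖ - ‖w‖) / (‖w‖ * ‖w'‖) := by
      field_simp
    rw [this, abs_div, abs_of_pos (mul_pos ha hb), div_mul_eq_mul_div]
    have hnum : |‖w'‖ - ‖w‖| * ‖w'‖ ≤ ‖w - w'‖ * (‖w‖ * ‖w'‖) := by
      have habs : |‖w'‖ - ‖w‖| ≤ ‖w' - w‖ := abs_norm_sub_norm_le _ _
      have : ‖w' - w‖ = ‖w - w'‖ := norm_sub_rev _ _
      rw [this] at habs
      calc |‖w'‖ - ‖w‖| * ‖w'‖ ≤ ‖w - w'‖ * ‖w'‖ :=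
            mul_le_mul_of_nonneg_right habs (norm_nonneg _)
        _ ≤ ‖w - w'‖ * (‖w‖ * ‖w'‖) := by
            apply mul_le_mul_of_nonneg_left _ (norm_nonneg _)
            nlinarith
    calc |‖w'‖ - ‖w‖| * ‖w'‖ / (‖w‖ * ‖w'‖) ≤ ‖w - w'‖ * (‖w‖ * ‖w'‖) / (‖w‖ * ‖w'‖) := by
          exact div_le_div_of_nonneg_right hnum (mul_pos ha hb).le
      _ = ‖w - w'‖ := by field_simp
  calc ‖‖w‖⁻¹ • (w - w') + (‖w‖⁻¹ - ‖w'‖⁻¹) • w'‖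
      ≤ ‖‖w‖⁻¹ • (w - w')‖ + ‖(‖w‖⁻¹ - ‖w'‖⁻¹) • w'‖ := norm_add_le _ _
    _ ≤ ‖w - w'‖ + ‖w - w'‖ := add_le_add h1 h2
    _ = ((2:ℝ≥0):ℝ) * ‖w - w'‖ := by push_cast; ring

noncomputable abbrev E2 := EuclideanSpace ℝ (Fin 2)

lemma euclidean_ball_hausdorff {R : ℝ} (hR : 0 ≤ R) :
    μH[2] (Metric.closedBall (0:E2) R) ≤ ENNReal.ofReal (16 * R ^ 2) := by
  set g : (Fin 2 → ℝ) → E2 := ⇑(EuclideanSpace.equiv (Fin 2) ℝ).symm with hg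
  have h3 : ∀ v : Fin 2 → ℝ, ‖g v‖ ≤ 2 * ‖v‖ := by
    intro v
    rw [EuclideanSpace.norm_eq]
    have hv0 : ‖v 0‖ ≤ ‖v‖ := norm_le_pi_norm v 0
    have hv1 : ‖v 1‖ ≤ ‖v‖ := norm_le_pi_norm v 1
    have hsum : (∑ i, ‖(g v) i‖ ^ 2) = ‖v 0‖ ^ 2 + ‖v 1‖ ^ 2 := by
      rw [Fin.sum_univ_two]; rfl
    rw [hsum]
    have h4 : ‖v 0‖ ^ 2 + ‖v 1‖ ^ 2 ≤ (2 * ‖v‖) ^ 2 := by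
      nlinarith [norm_nonneg v, norm_nonneg (v 0), norm_nonneg (v 1)]
    calc Real.sqrt (‖v 0‖ ^ 2 + ‖v 1‖ ^ 2) ≤ Real.sqrt ((2 * ‖v‖) ^ 2) :=
          Real.sqrt_le_sqrt h4
      _ = 2 * ‖v‖ := Real.sqrt_sq (by positivity)
  have hlip : LipschitzWith 2 g := by
    apply LipschitzWith.of_dist_le_mul
    intro a b
    have h1 : dist (g a) (g b) = ‖g a - g b‖ := dist_eq_norm _ _
    have h2 : g a - g b = g (a - b) := by simp [hg]
    rw [h1, h2]
    calc ‖g (a - b)‖ ≤ 2 * ‖a - b‖ := h3 _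
      _ = ((2:ℝ≥0):ℝ) * dist a b := by rw [dist_eq_norm]; norm_num
  have hsub : Metric.closedBall (0:E2) R ⊆ g '' (Metric.closedBall (0 : Fin 2 → ℝ) R) := by
    intro y hy
    refine ⟨EuclideanSpace.equiv (Fin 2) ℝ y, ?_, by simp [hg]⟩
    rw [Metric.mem_closedBall, dist_zero_right] at hy ⊢
    refine le_trans ?_ hy
    apply pi_norm_le_iff_of_nonneg (norm_nonneg _) |>.2
    intro i
    rw [EuclideanSpace.norm_eq]
    have : ‖y i‖ ^ 2 ≤ ∑ j, ‖y j‖ ^ 2 :=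
      Finset.single_le_sum (f := fun j => ‖y j‖ ^ 2) (fun j _ => by positivity)
        (Finset.mem_univ i)
    calc ‖(EuclideanSpace.equiv (Fin 2) ℝ) y i‖ = Real.sqrt (‖y i‖ ^ 2) :=
          (Real.sqrt_sq (norm_nonneg _)).symm
      _ ≤ Real.sqrt (∑ j, ‖y j‖ ^ 2) := Real.sqrt_le_sqrt this
  have hpi : μH[2] (Metric.closedBall (0 : Fin 2 → ℝ) R) = ENNReal.ofReal ((2 * R) ^ 2) := by
    conv_lhs => rw [show (2:ℝ) = ((Fintype.card (Fin 2):ℝ)) by simp, hausdorffMeasure_pi_real]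
    rw [Real.volume_pi_closedBall _ hR]
    norm_num
  calc μH[2] (Metric.closedBall (0:E2) R)
      ≤ μH[2] (g '' (Metric.closedBall (0 : Fin 2 → ℝ) R)) := measure_mono hsub
    _ ≤ ((2:ℝ≥0):ℝ≥0∞) ^ (2:ℝ) * μH[2] (Metric.closedBall (0 : Fin 2 → ℝ) R) :=
        hlip.hausdorffMeasure_image_le (by norm_num) _
    _ = 4 * ENNReal.ofReal ((2 * R) ^ 2) := by
        rw [hpi]
        congr 1
        rw [show (2:ℝ) = ((2:ℕ):ℝ) by norm_num, ENNReal.rpow_natCast]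
        norm_num
    _ = ENNReal.ofReal (16 * R ^ 2) := by
        rw [show (4:ℝ≥0∞) = ENNReal.ofReal 4 by norm_num,
          ← ENNReal.ofReal_mul (by norm_num)]
        ring_nf

set_option maxHeartbeats 1000000 in
lemma cap_hausdorff_le (x : EE) (hx : ‖x‖ = 1) {t : ℝ} (ht0 : 0 ≤ t) (ht : t ≤ π / 3) :
    μH[2] {y : EE | ‖y‖ = 1 ∧ Real.cos t ≤ ⟪x, y⟫} ≤
      ENNReal.ofReal (64 * Real.tan t ^ 2) := by
  have hπ : t ≤ π := ht.trans (by nlinarith [Real.pi_pos])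
  have hcos : (1:ℝ)/2 ≤ Real.cos t := by
    rw [← Real.cos_pi_div_three]
    exact Real.cos_le_cos_of_nonneg_of_le_pi ht0 (by nlinarith [Real.pi_pos]) ht
  have hcospos : (0:ℝ) < Real.cos t := lt_of_lt_of_le (by norm_num) hcos
  set R := Real.tan t with hRdef
  have hR0 : 0 ≤ R := Real.tan_nonneg_of_nonneg_of_le_pi_div_two ht0
    (by nlinarith [Real.pi_pos])
  set B : Set EE := {w | ⟪x, w⟫ = 1 ∧ ‖w - x‖ ≤ R} with hB
  -- B is in the normalization domain
  have hBdom : B ⊆ {w : EE | 1 ≤ ‖w‖} := by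
    rintro w ⟨hw1, -⟩
    have := real_inner_le_norm x w
    rw [hw1, hx, one_mul] at this
    exact this
  -- cap ⊆ normalize '' B
  have hcapsub : {y : EE | ‖y‖ = 1 ∧ Real.cos t ≤ ⟪x, y⟫} ⊆
      (fun w : EE => ‖w‖⁻¹ • w) '' B := by
    rintro y ⟨hy1, hy2⟩
    have hcy : 0 < ⟪x, y⟫ := lt_of_lt_of_le hcospos hy2
    set a : ℝ := ⟪x, y⟫ with ha
    have hus : ‖a⁻¹ • y‖ = a⁻¹ := by
      rw [norm_smul, Real.norm_eq_abs, abs_of_pos (inv_pos.2 hcy), hy1, mul_one]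
    refine ⟨a⁻¹ • y, ⟨?_, ?_⟩, ?_⟩
    · rw [real_inner_smul_right]
      exact inv_mul_cancel₀ hcy.ne'
    · have hux : ⟪a⁻¹ • y, x⟫ = 1 := by
        rw [real_inner_smul_left, real_inner_comm]
        exact inv_mul_cancel₀ hcy.ne'
      have hnorm : ‖a⁻¹ • y - x‖ ^ 2 = a⁻¹ ^ 2 - 1 := by
        rw [norm_sub_sq_real, hus, hux, hx]
        ring
      have h3 : R ^ 2 = (Real.cos t)⁻¹ ^ 2 - 1 := by
        rw [hRdef, Real.tan_eq_sin_div_cos, div_pow, Real.sin_sq]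
        field_simp
      have h1 : a⁻¹ ≤ (Real.cos t)⁻¹ := by
        exact inv_anti₀ hcospos hy2
      have h2 : (0:ℝ) < a⁻¹ := inv_pos.2 hcy
      have htan : a⁻¹ ^ 2 - 1 ≤ R ^ 2 := by rw [h3]; nlinarith
      have hfin : ‖a⁻¹ • y - x‖ ^ 2 ≤ R ^ 2 := hnorm ▸ htan
      nlinarith [norm_nonneg (a⁻¹ • y - x)]
    · show ‖a⁻¹ • y‖⁻¹ • (a⁻¹ • y) = y
      rw [hus, inv_inv, smul_smul, mul_inv_cancel₀ hcy.ne', one_smul]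
  -- plane disk bound
  have hxne : x ≠ 0 := by intro h; rw [h, norm_zero] at hx; norm_num at hx
  haveI : Fact (Module.finrank ℝ EE = 2 + 1) := ⟨finrank_euclideanSpace_fin⟩
  set L : E2 ≃ₗᵢ[ℝ] (ℝ ∙ x)ᗮ :=
    (OrthonormalBasis.fromOrthogonalSpanSingleton 2 hxne).repr.symm with hL
  set f : E2 → EE := fun u => x + (L u : EE) with hf
  have hfiso : Isometry f := by
    intro u v
    rw [edist_dist, edist_dist]
    congr 1
    calc dist (f u) (f v) = dist ((L u : EE)) ((L v : EE)) := dist_add_left x _ _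
      _ = dist (L u) (L v) := (Subtype.dist_eq _ _).symm
      _ = dist u v := L.isometry.dist_eq u v
  have hBsub : B ⊆ f '' Metric.closedBall (0:E2) R := by
    rintro w ⟨hw1, hw2⟩
    have hv : w - x ∈ (ℝ ∙ x)ᗮ := by
      rw [Submodule.mem_orthogonal_singleton_iff_inner_right]
      rw [inner_sub_right, hw1, real_inner_self_eq_norm_sq, hx]
      norm_num
    refine ⟨L.symm ⟨w - x, hv⟩, ?_, ?_⟩
    · rw [Metric.mem_closedBall, dist_zero_right]
      have : ‖L.symm ⟨w - x, hv⟩‖ = ‖w - x‖ := by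
        rw [L.symm.norm_map]
        simp
      rw [this]; exact hw2
    · rw [hf]
      simp only [LinearIsometryEquiv.apply_symm_apply, Submodule.coe_mk]
      abel
  calc μH[2] {y : EE | ‖y‖ = 1 ∧ Real.cos t ≤ ⟪x, y⟫}
      ≤ μH[2] ((fun w : EE => ‖w‖⁻¹ • w) '' B) := measure_mono hcapsub
    _ ≤ ((2:ℝ≥0):ℝ≥0∞) ^ (2:ℝ) * μH[2] B :=
        (normalize_lip.mono hBdom).hausdorffMeasure_image_le (by norm_num)
    _ ≤ ((2:ℝ≥0):ℝ≥0∞) ^ (2:ℝ) * μH[2] (f '' Metric.closedBall (0:E2) R) := by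
        gcongr
    _ = ((2:ℝ≥0):ℝ≥0∞) ^ (2:ℝ) * μH[2] (Metric.closedBall (0:E2) R) := by
        rw [hfiso.hausdorffMeasure_image (Or.inl (by norm_num))]
    _ ≤ ((2:ℝ≥0):ℝ≥0∞) ^ (2:ℝ) * ENNReal.ofReal (16 * R ^ 2) := by
        gcongr
        exact euclidean_ball_hausdorff hR0
    _ = ENNReal.ofReal (64 * R ^ 2) := by
        rw [show ((2:ℝ≥0):ℝ≥0∞) ^ (2:ℝ) = ENNReal.ofReal 4 by
          rw [show (2:ℝ) = ((2:ℕ):ℝ) by norm_num, ENNReal.rpow_natCast]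
          norm_num,
          ← ENNReal.ofReal_mul (by norm_num)]
        congr 1
        ring

lemma measurableSet_S2 : MeasurableSet S2 :=
  Metric.isClosed_sphere.measurableSet

lemma sphereUniform_compl_S2 : sphereUniform S2ᶜ = 0 := by
  rw [sphereUniform, Measure.smul_apply, Measure.restrict_apply measurableSet_S2.compl,
    Set.compl_inter_self, measure_empty, smul_zero]

lemma measurableSet_capSet (x : EE) (t : ℝ) : MeasurableSet {y : EE | angDist x y ≤ t} := by
  have hcont : Continuous fun y : EE => angDist x y :=
    Real.continuous_arccos.comp (Continuous.inner continuous_const continuous_id)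
  exact (isClosed_Iic.preimage hcont).measurableSet

lemma sphereUniform_cap_le (huniv : sphereUniform Set.univ ≤ 1) {x : EE} (hx : ‖x‖ = 1)
    {p : ℝ} (hp : 0 ≤ p) :
    sphereUniform {y : EE | angDist x y ≤ 2 * (2 * Real.arcsin (Real.sqrt p))} ≤
      ENNReal.ofReal (4096 * p) := by
  rcases le_or_gt (1/36 : ℝ) p with hcase | hcase
  · calc sphereUniform {y : EE | angDist x y ≤ 2 * (2 * Real.arcsin (Real.sqrt p))}
        ≤ sphereUniform Set.univ := measure_mono (Set.subset_univ _)
      _ ≤ 1 := huniv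
      _ ≤ ENNReal.ofReal (4096 * p) := by
          rw [show (1:ℝ≥0∞) = ENNReal.ofReal 1 by norm_num]
          exact ENNReal.ofReal_le_ofReal (by linarith)
  · set u := Real.arcsin (Real.sqrt p) with hu
    have hsp0 : 0 ≤ Real.sqrt p := Real.sqrt_nonneg p
    have hsp : Real.sqrt p < 1/6 := by
      have h1 : Real.sqrt p < Real.sqrt (1/36) := by
        apply Real.sqrt_lt_sqrt hp hcase
      rwa [show Real.sqrt (1/36) = 1/6 by
        rw [show (1/36:ℝ) = (1/6)^2 by norm_num, Real.sqrt_sq (by norm_num)]] at h1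
    have hu0 : 0 ≤ u := Real.arcsin_nonneg.2 hsp0
    have huπ : u ≤ π/2 := Real.arcsin_le_pi_div_two _
    have hsinu : Real.sin u = Real.sqrt p := Real.sin_arcsin (by linarith) (by linarith)
    have hπ4 : π ≤ 4 := Real.pi_le_four
    have hπ0 : 0 < π := Real.pi_pos
    have hu12 : u ≤ π/12 := by
      have h2 := Real.mul_le_sin hu0 huπ
      rw [hsinu] at h2
      rw [div_mul_eq_mul_div, div_le_iff₀ hπ0] at h2
      nlinarith [mul_lt_mul_of_pos_left hsp hπ0]
    set t := 2 * (2 * u) with htdef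
    have ht0 : 0 ≤ t := by rw [htdef]; linarith
    have ht3 : t ≤ π/3 := by rw [htdef]; linarith
    have hcost : (1:ℝ)/2 ≤ Real.cos t := by
      rw [← Real.cos_pi_div_three]
      exact Real.cos_le_cos_of_nonneg_of_le_pi ht0 (by nlinarith) ht3
    have hsubset : {y : EE | angDist x y ≤ t} ∩ S2 ⊆
        {y : EE | ‖y‖ = 1 ∧ Real.cos t ≤ ⟪x, y⟫} := by
      rintro y ⟨hy1, hy2⟩
      have hy1' : Real.arccos ⟪x, y⟫ ≤ t := hy1
      have hyn : ‖y‖ = 1 := mem_sphere_zero_iff_norm.1 hy2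
      refine ⟨hyn, ?_⟩
      have hinner : |⟪x, y⟫| ≤ 1 := by
        have := abs_real_inner_le_norm x y
        rwa [hx, hyn, one_mul] at this
      rw [abs_le] at hinner
      have h := Real.cos_le_cos_of_nonneg_of_le_pi (Real.arccos_nonneg _)
        (le_trans ht3 (by nlinarith)) hy1'
      rwa [Real.cos_arccos hinner.1 hinner.2] at h
    have hμ : sphereUniform {y : EE | angDist x y ≤ t} =
        (ENNReal.ofReal (4 * π))⁻¹ * μH[2] ({y : EE | angDist x y ≤ t} ∩ S2) := by
      rw [sphereUniform, Measure.smul_apply, Measure.restrict_apply (measurableSet_capSet x t),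
        smul_eq_mul]
    rw [hμ]
    have hcap : μH[2] ({y : EE | angDist x y ≤ t} ∩ S2) ≤
        ENNReal.ofReal (64 * Real.tan t ^ 2) :=
      le_trans (measure_mono hsubset) (cap_hausdorff_le x hx ht0 ht3)
    have hcosu : 0 ≤ Real.cos u := Real.cos_nonneg_of_mem_Icc ⟨by linarith, huπ⟩
    have hcosu1 : Real.cos u ≤ 1 := Real.cos_le_one u
    have hcos2u : |Real.cos (2*u)| ≤ 1 := Real.abs_cos_le_one _
    have hsint : Real.sin t ≤ 4 * Real.sqrt p := by
      have h1 : Real.sin t = 2 * Real.sin (2*u) * Real.cos (2*u) := by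
        rw [htdef, Real.sin_two_mul]
      have h2 : Real.sin (2*u) = 2 * Real.sin u * Real.cos u := Real.sin_two_mul u
      rw [h1, h2, hsinu]
      rw [abs_le] at hcos2u
      nlinarith [mul_nonneg hsp0 hcosu, mul_le_of_le_one_right (mul_nonneg hsp0 hcosu) hcos2u.2,
        mul_le_of_le_one_right hsp0 hcosu1]
    have hsint0 : 0 ≤ Real.sin t := Real.sin_nonneg_of_nonneg_of_le_pi ht0 (by nlinarith)
    have htant : Real.tan t ≤ 8 * Real.sqrt p := by
      rw [Real.tan_eq_sin_div_cos]
      rw [div_le_iff₀ (by linarith : (0:ℝ) < Real.cos t)]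
      nlinarith
    have htant0 : 0 ≤ Real.tan t :=
      Real.tan_nonneg_of_nonneg_of_le_pi_div_two ht0 (by nlinarith)
    have hfin : μH[2] ({y : EE | angDist x y ≤ t} ∩ S2) ≤ ENNReal.ofReal (4096 * p) := by
      refine le_trans hcap (ENNReal.ofReal_le_ofReal ?_)
      have hsq : Real.sqrt p ^ 2 = p := Real.sq_sqrt hp
      nlinarith
    calc (ENNReal.ofReal (4 * π))⁻¹ * μH[2] ({y : EE | angDist x y ≤ t} ∩ S2)
        ≤ 1 * ENNReal.ofReal (4096 * p) := by
          apply mul_le_mul' _ hfin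
          rw [ENNReal.inv_le_one]
          exact ENNReal.one_le_ofReal.2 (by nlinarith [Real.pi_gt_three])
      _ = ENNReal.ofReal (4096 * p) := one_mul _

lemma measurableSet_prodCap (t : ℝ) :
    MeasurableSet {z : EE × EE | angDist z.1 z.2 ≤ t} := by
  have hcont : Continuous fun z : EE × EE => angDist z.1 z.2 :=
    Real.continuous_arccos.comp (Continuous.inner continuous_fst continuous_snd)
  exact (isClosed_Iic.preimage hcont).measurableSet

lemma prod_cap_le [IsProbabilityMeasure sphereUniform] {p : ℝ} (hp : 0 ≤ p) :
    (sphereUniform.prod sphereUniform)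
        {z : EE × EE | angDist z.1 z.2 ≤ 2 * (2 * Real.arcsin (Real.sqrt p))} ≤
      ENNReal.ofReal (4096 * p) := by
  set t := 2 * (2 * Real.arcsin (Real.sqrt p)) with htdef
  rw [Measure.prod_apply (measurableSet_prodCap t)]
  have hae : ∀ᵐ x ∂sphereUniform, x ∈ S2 := by
    rw [ae_iff]
    convert sphereUniform_compl_S2 using 2
    rfl
  calc ∫⁻ x, sphereUniform (Prod.mk x ⁻¹' {z : EE × EE | angDist z.1 z.2 ≤ t}) ∂sphereUniform
      ≤ ∫⁻ _, ENNReal.ofReal (4096 * p) ∂sphereUniform := by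
        apply lintegral_mono_ae
        filter_upwards [hae] with x hxS2
        have hxn : ‖x‖ = 1 := mem_sphere_zero_iff_norm.1 hxS2
        have : Prod.mk x ⁻¹' {z : EE × EE | angDist z.1 z.2 ≤ t} =
            {y : EE | angDist x y ≤ t} := rfl
        rw [this]
        exact sphereUniform_cap_le (by rw [measure_univ]) hxn hp
    _ = ENNReal.ofReal (4096 * p) := by rw [lintegral_const, measure_univ, mul_one]

/-- Proposition 4.1(iii): for `c > 0` and `α > 3`, with `p_N = c/N^α` and cap radius
`a_N = 2·arcsin √p_N`, almost surely, for all sufficiently large `N`, the random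
intersection graph `G_N` has no edges, i.e. every vertex is isolated. -/
theorem all_vertices_isolated_eventually
    (c α : ℝ) (hc : 0 < c) (hα : 3 < α)
    {Ω : Type*} [MeasurableSpace Ω] (P : Measure Ω) [IsProbabilityMeasure P]
    (X : ℕ → Ω → EuclideanSpace ℝ (Fin 3))
    (hmeas : ∀ i, Measurable (X i))
    (hindep : ProbabilityTheory.iIndepFun X P)
    (hdist : ∀ i, Measure.map (X i) P = sphereUniform) :
    ∀ᵐ ω ∂P, ∀ᶠ N : ℕ in Filter.atTop, ∀ i < N, ∀ j < N, i ≠ j →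
      2 * (2 * Real.arcsin (Real.sqrt (c / (N : ℝ) ^ α))) <
        angDist (X i ω) (X j ω) := by
  haveI hPr : IsProbabilityMeasure sphereUniform := by
    rw [← hdist 0]
    exact Measure.isProbabilityMeasure_map (hmeas 0).aemeasurable
  set q : ℕ → ℝ := fun N => c / (N : ℝ) ^ α with hq
  have hq0 : ∀ N, 0 ≤ q N := fun N =>
    div_nonneg hc.le (Real.rpow_nonneg (Nat.cast_nonneg N) α)
  set A : ℕ → Set Ω := fun N => ⋃ i ∈ Finset.range N, ⋃ j ∈ Finset.range N,
    {ω | i ≠ j ∧ angDist (X i ω) (X j ω) ≤ 2 * (2 * Real.arcsin (Real.sqrt (q N)))} with hA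
  -- per-pair bound
  have hpair : ∀ N i j : ℕ,
      P {ω | i ≠ j ∧ angDist (X i ω) (X j ω) ≤ 2 * (2 * Real.arcsin (Real.sqrt (q N)))} ≤
        ENNReal.ofReal (4096 * q N) := by
    intro N i j
    by_cases hij : i = j
    · have : {ω | i ≠ j ∧ angDist (X i ω) (X j ω) ≤
          2 * (2 * Real.arcsin (Real.sqrt (q N)))} = (∅ : Set Ω) := by
        ext ω; simp [hij]
      rw [this, measure_empty]
      exact zero_le
    · set t := 2 * (2 * Real.arcsin (Real.sqrt (q N))) with ht
      have hset : {ω | i ≠ j ∧ angDist (X i ω) (X j ω) ≤ t} =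
          (fun ω => (X i ω, X j ω)) ⁻¹' {z : EE × EE | angDist z.1 z.2 ≤ t} := by
        ext ω; simp [hij]
      rw [hset]
      have hmap : Measure.map (fun ω => (X i ω, X j ω)) P =
          sphereUniform.prod sphereUniform := by
        have h := (ProbabilityTheory.indepFun_iff_map_prod_eq_prod_map_map
          (hmeas i).aemeasurable (hmeas j).aemeasurable).1 (hindep.indepFun hij)
        rwa [hdist i, hdist j] at h
      rw [← Measure.map_apply ((hmeas i).prodMk (hmeas j)) (measurableSet_prodCap t), hmap]
      exact prod_cap_le (hq0 N)
  -- bound on P (A N)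
  have hbound : ∀ N, P (A N) ≤ ENNReal.ofReal (4096 * c * (N : ℝ) ^ (2 - α)) := by
    intro N
    have h1 : P (A N) ≤ (N : ℝ≥0∞) * ((N : ℝ≥0∞) * ENNReal.ofReal (4096 * q N)) := by
      rw [hA]
      refine le_trans (measure_biUnion_finset_le _ _) ?_
      calc ∑ i ∈ Finset.range N, P (⋃ j ∈ Finset.range N,
              {ω | i ≠ j ∧ angDist (X i ω) (X j ω) ≤
                2 * (2 * Real.arcsin (Real.sqrt (q N)))})
          ≤ ∑ _i ∈ Finset.range N, ((N : ℝ≥0∞) * ENNReal.ofReal (4096 * q N)) := by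
            refine Finset.sum_le_sum fun i _ => ?_
            refine le_trans (measure_biUnion_finset_le _ _) ?_
            refine le_trans (Finset.sum_le_sum fun j _ => hpair N i j) ?_
            rw [Finset.sum_const, Finset.card_range, nsmul_eq_mul]
        _ = (N : ℝ≥0∞) * ((N : ℝ≥0∞) * ENNReal.ofReal (4096 * q N)) := by
            rw [Finset.sum_const, Finset.card_range, nsmul_eq_mul]
    refine le_trans h1 ?_
    have h2 : (N : ℝ≥0∞) * ((N : ℝ≥0∞) * ENNReal.ofReal (4096 * q N)) =
        ENNReal.ofReal ((N : ℝ) * ((N : ℝ) * (4096 * q N))) := by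
      rw [ENNReal.ofReal_mul (Nat.cast_nonneg N), ENNReal.ofReal_mul (Nat.cast_nonneg N),
        ENNReal.ofReal_natCast]
    rw [h2]
    apply ENNReal.ofReal_le_ofReal
    rcases Nat.eq_zero_or_pos N with hN | hN
    · subst hN
      simp only [Nat.cast_zero, zero_mul]
      rw [Real.zero_rpow (by intro h; linarith [sub_eq_zero.1 h] : (2:ℝ) - α ≠ 0)]
      positivity
    · have hN0 : (0:ℝ) < (N : ℝ) := by exact_mod_cast hN
      have heq : (N : ℝ) * ((N : ℝ) * (4096 * q N)) = 4096 * c * (N : ℝ) ^ (2 - α) := by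
        rw [show (2:ℝ) - α = 2 + (-α) by ring, Real.rpow_add hN0,
          Real.rpow_neg hN0.le,
          show (N:ℝ) ^ (2:ℝ) = (N:ℝ) * (N:ℝ) by
            rw [show (2:ℝ) = ((2:ℕ):ℝ) by norm_num, Real.rpow_natCast]; ring]
        simp only [hq, div_eq_mul_inv]
        ring
      rw [heq]
  -- Borel–Cantelli
  have hsummable : Summable (fun N : ℕ => 4096 * c * (N : ℝ) ^ (2 - α)) :=
    (Real.summable_nat_rpow.2 (by linarith)).mul_left _
  have hsum : (∑' N, P (A N)) ≠ ⊤ := by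
    have hle : (∑' N, P (A N)) ≤
        ∑' N : ℕ, ENNReal.ofReal (4096 * c * (N : ℝ) ^ (2 - α)) :=
      ENNReal.tsum_le_tsum hbound
    have heq : ∑' N : ℕ, ENNReal.ofReal (4096 * c * (N : ℝ) ^ (2 - α)) =
        ENNReal.ofReal (∑' N : ℕ, 4096 * c * (N : ℝ) ^ (2 - α)) :=
      (ENNReal.ofReal_tsum_of_nonneg
        (fun N => by positivity) hsummable).symm
    rw [heq] at hle
    exact ne_top_of_le_ne_top ENNReal.ofReal_ne_top hle
  have hBC := MeasureTheory.ae_eventually_notMem hsum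
  filter_upwards [hBC] with ω hω
  refine hω.mono fun N hN => ?_
  intro i hi j hj hij
  by_contra hcon
  push_neg at hcon
  apply hN
  rw [hA]
  simp only [Set.mem_iUnion, Finset.mem_range]
  exact ⟨i, hi, j, hj, hij, hcon⟩
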